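/- Let G be a finite group and a coprime to |G|. For each divisor d of |G|, the set G_d of elements of order d is invariant under the a-th power map ρ_a, and ρ_a restricted to G_d is a product of G(d)/o_d(a) disjoint cycles each of length o_d(a), where G(d) = |G_d| and o_d(a) is the multiplicative order of a mod d. -/

import Mathlib

open Function MulAction Subgroup

private lemma coe_pow_apply {G : Type*} [Group G] [Fintype G] (a : ℤ) (d : ℕ)
    (σ : Equiv.Perm {g : G // orderOf g = d}) (hσ : ∀ x, (σ x : G) = (x : G) ^ a) :
    ∀ (k : ℕ) (x : {g : G // orderOf g = d}), ((σ ^ k) x : G) = (x : G) ^ (a ^ k) := by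
  intro k
  induction k with
  | zero => intro x; simp
  | succ n ih =>
    intro x
    rw [pow_succ', Equiv.Perm.mul_apply, hσ, ih, ← zpow_mul, pow_succ, mul_comm]

/-- For `a` coprime to `|G|` and `d ∣ |G|`, the set of elements of order `d` is invariant
under `ρ_a : g ↦ g ^ a`, and `ρ_a` restricted to this set is a product of
`G(d)/o_d(a)` disjoint cycles, each of length `o_d(a)` (every point lies on a cycle of
length `o_d(a)`, the multiplicative order of `a` mod `d`, which divides `G(d)`). -/
theorem powMap_restrict_cycles (G : Type*) [Group G] [Fintype G] (a : ℤ)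
    (ha : Int.gcd a (Fintype.card G) = 1) (d : ℕ) (hd : d ∣ Fintype.card G) :
    (∀ g : G, orderOf g = d → orderOf (g ^ a) = d) ∧
    ∀ σ : Equiv.Perm {g : G // orderOf g = d}, (∀ x, (σ x : G) = (x : G) ^ a) →
      (∀ x, Function.minimalPeriod σ x = orderOf ((a : ZMod d))) ∧
      orderOf ((a : ZMod d)) ∣ Nat.card {g : G // orderOf g = d} := by
  have hd0 : d ≠ 0 := by
    rintro rfl
    exact Fintype.card_ne_zero (Nat.eq_zero_of_zero_dvd hd)
  haveI : NeZero d := ⟨hd0⟩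
  -- coprimality of a and d
  have hcop : IsCoprime a (d : ℤ) := by
    have h0 : IsCoprime a ((Fintype.card G : ℕ) : ℤ) := Int.isCoprime_iff_gcd_eq_one.mpr ha
    exact h0.of_isCoprime_of_dvd_right (Int.natCast_dvd_natCast.mpr hd)
  obtain ⟨u, v, huv⟩ := hcop
  -- (a : ZMod d) is a unit
  have hunit : IsUnit ((a : ZMod d)) := by
    refine IsUnit.of_mul_eq_one (u : ZMod d) ?_
    have := congrArg (fun z : ℤ => (z : ZMod d)) huv
    push_cast at this
    rw [ZMod.natCast_self] at this
    simpa [mul_comm] using this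
  have hopos : 0 < orderOf ((a : ZMod d)) := by
    rw [← hunit.unit_spec, orderOf_units]
    exact orderOf_pos _
  -- first part
  have part1 : ∀ g : G, orderOf g = d → orderOf (g ^ a) = d := by
    intro g hg
    have h1 : orderOf (g ^ a) ∣ d := by
      rw [orderOf_dvd_iff_pow_eq_one, ← zpow_natCast, ← zpow_mul, mul_comm, zpow_mul,
        zpow_natCast, ← hg, pow_orderOf_eq_one, one_zpow]
    have h2 : d ∣ orderOf (g ^ a) := by
      have hg' : (g ^ a) ^ u = g := by
        rw [← zpow_mul]
        have : g ^ (a * u) = g ^ (1 : ℤ) := by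
          rw [← orderOf_dvd_sub_iff_zpow_eq_zpow (x := g), hg]
          exact ⟨-v, by linear_combination huv⟩
        simpa using this
      calc d = orderOf g := hg.symm
        _ = orderOf ((g ^ a) ^ u) := by rw [hg']
        _ ∣ orderOf (g ^ a) := orderOf_dvd_of_mem_zpowers (zpow_mem (mem_zpowers _) u)
    exact Nat.dvd_antisymm h1 h2
  refine ⟨part1, fun σ hσ => ?_⟩
  -- characterization of periodic points
  have hper : ∀ (k : ℕ) (x : {g : G // orderOf g = d}),
      IsPeriodicPt σ k x ↔ orderOf ((a : ZMod d)) ∣ k := by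
    intro k x
    have hpow := coe_pow_apply a d σ hσ k x
    rw [← Equiv.Perm.iterate_eq_pow σ k] at hpow
    rw [IsPeriodicPt, IsFixedPt]
    constructor
    · intro h
      rw [h] at hpow
      have h3 : (x : G) ^ (a ^ k) = (x : G) ^ (1 : ℤ) := by rw [← hpow]; simp
      rw [← orderOf_dvd_sub_iff_zpow_eq_zpow (x := (x : G)), x.2] at h3
      have h4 : ((a : ZMod d)) ^ k = 1 := by
        have := (ZMod.intCast_zmod_eq_zero_iff_dvd (a ^ k - 1) d).mpr h3
        push_cast at this
        linear_combination this
      exact orderOf_dvd_of_pow_eq_one h4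
    · intro h
      have h1 : ((a : ZMod d)) ^ k = 1 := orderOf_dvd_iff_pow_eq_one.mp h
      have h2 : (d : ℤ) ∣ a ^ k - 1 := by
        rw [← ZMod.intCast_zmod_eq_zero_iff_dvd]
        push_cast
        rw [h1]; ring
      have h3 : (x : G) ^ (a ^ k) = (x : G) ^ (1 : ℤ) := by
        rw [← orderOf_dvd_sub_iff_zpow_eq_zpow (x := (x : G)), x.2]
        exact h2
      apply Subtype.ext
      rw [hpow, h3, zpow_one]
  have hmin : ∀ x, Function.minimalPeriod σ x = orderOf ((a : ZMod d)) := by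
    intro x
    apply Nat.dvd_antisymm
    · exact IsPeriodicPt.minimalPeriod_dvd ((hper _ x).mpr dvd_rfl)
    · exact (hper _ x).mp (isPeriodicPt_minimalPeriod σ x)
  refine ⟨hmin, ?_⟩
  -- divisibility via orbit decomposition
  have key : Nat.card {g : G // orderOf g = d} =
      Nat.card (orbitRel.Quotient (zpowers σ) {g : G // orderOf g = d}) *
        orderOf ((a : ZMod d)) := by
    have e : {g : G // orderOf g = d} ≃
        orbitRel.Quotient (zpowers σ) {g : G // orderOf g = d} × ZMod (orderOf ((a : ZMod d))) :=
      ((selfEquivSigmaOrbits (zpowers σ) {g : G // orderOf g = d}).trans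
        (Equiv.sigmaCongrRight fun q => orbitZPowersEquiv σ q.out)).trans
        ((Equiv.sigmaCongrRight fun q => Equiv.cast (by
            congr 1
            exact hmin q.out)).trans (Equiv.sigmaEquivProd _ _))
    rw [Nat.card_congr e, Nat.card_prod, Nat.card_zmod]
  rw [key]
  exact dvd_mul_left _ _
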